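/- Let N ≥ 4 and ℓ > 0. If an equilateral closed polygon y : ℤ/Nℤ → ℝ² with edge length ℓ satisfies ∑_{i=1}^N |y_i − y_{i+2}| = 2Nℓ cos(π/N), then y is the image of the regular N-gon with edge length ℓ under an isometry of ℝ². -/

import Mathlib

open Complex Finset Real
namespace RegAux
variable {N : ℕ} [NeZero N]

lemma chi_add (a b : ZMod N) : ZMod.stdAddChar (a + b) = ZMod.stdAddChar a * ZMod.stdAddChar b :=
  AddChar.map_add_eq_mul _ _ _

lemma chi_abs (a : ZMod N) : ‖ZMod.stdAddChar a‖ = 1 := by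
  rw [ZMod.stdAddChar_apply]; exact Circle.norm_coe _

lemma chi_conj (a : ZMod N) :
    (starRingEnd ℂ) (ZMod.stdAddChar a) = ZMod.stdAddChar (-a) := by
  have h1 : ZMod.stdAddChar a * ZMod.stdAddChar (-a) = 1 := by
    rw [← chi_add]; simp
  have h2 : ZMod.stdAddChar a * (starRingEnd ℂ) (ZMod.stdAddChar a) = 1 := by
    rw [Complex.mul_conj]
    norm_cast
    rw [← Complex.sq_norm, chi_abs]; norm_num
  have h3 : ZMod.stdAddChar a ≠ 0 := by
    intro h; rw [h] at h1; simp at h1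
  rw [← h1] at h2
  exact mul_left_cancel₀ h3 h2

lemma chi_orth {m : ZMod N} (hm : m ≠ 0) : ∑ k : ZMod N, ZMod.stdAddChar (m * k) = 0 := by
  have hp := ZMod.isPrimitive_stdAddChar N
  have hnt : AddChar.mulShift (ZMod.stdAddChar (N := N)) m ≠ 0 := by
    rw [← AddChar.one_eq_zero]; exact hp hm
  have := AddChar.sum_eq_zero_iff_ne_zero.mpr hnt
  simpa [AddChar.mulShift_apply] using this

lemma chi_sum_eq (m : ZMod N) :
    ∑ k : ZMod N, ZMod.stdAddChar (m * k) = if m = 0 then (N : ℂ) else 0 := by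
  split_ifs with h
  · simp [h, ZMod.card]
  · exact chi_orth h

noncomputable def Ehat (v : ZMod N → ℂ) (k : ZMod N) : ℂ := ∑ j, ZMod.stdAddChar (j * k) * v j

lemma Ehat_conj (v : ZMod N → ℂ) (k : ZMod N) :
    (starRingEnd ℂ) (Ehat v k) = ∑ j, ZMod.stdAddChar (-(j * k)) * (starRingEnd ℂ) (v j) := by
  rw [Ehat, map_sum]
  exact sum_congr rfl fun j _ => by rw [map_mul (starRingEnd ℂ), chi_conj]

lemma Ehat_pair (v : ZMod N → ℂ) (s : ZMod N) :
    ∑ k, Ehat v k * (starRingEnd ℂ) (Ehat v k) * ZMod.stdAddChar (k * s)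
      = (N : ℂ) * ∑ j, v (j - s) * (starRingEnd ℂ) (v j) := by
  have step1 : ∀ k : ZMod N, Ehat v k * (starRingEnd ℂ) (Ehat v k) * ZMod.stdAddChar (k * s)
      = ∑ j, ∑ j', ZMod.stdAddChar ((j - j' + s) * k) * (v j * (starRingEnd ℂ) (v j')) := by
    intro k
    rw [Ehat_conj, Ehat, sum_mul_sum, sum_mul]
    refine sum_congr rfl fun j _ => ?_
    rw [sum_mul]
    refine sum_congr rfl fun j' _ => ?_
    have h : (j - j' + s) * k = j * k + (-(j' * k) + k * s) := by ring
    rw [h, chi_add, chi_add]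
    ring
  calc ∑ k, Ehat v k * (starRingEnd ℂ) (Ehat v k) * ZMod.stdAddChar (k * s)
      = ∑ k : ZMod N, ∑ j, ∑ j',
          ZMod.stdAddChar ((j - j' + s) * k) * (v j * (starRingEnd ℂ) (v j')) :=
        sum_congr rfl fun k _ => step1 k
    _ = ∑ j : ZMod N, ∑ j' : ZMod N,
          (∑ k : ZMod N, ZMod.stdAddChar ((j - j' + s) * k)) * (v j * (starRingEnd ℂ) (v j')) := by
        rw [Finset.sum_comm]
        refine sum_congr rfl fun j _ => ?_
        rw [Finset.sum_comm]
        exact sum_congr rfl fun j' _ => (sum_mul _ _ _).symm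
    _ = ∑ j : ZMod N, (N : ℂ) * (v j * (starRingEnd ℂ) (v (j + s))) := by
        refine sum_congr rfl fun j _ => ?_
        rw [Finset.sum_eq_single (j + s)]
        · rw [chi_sum_eq, if_pos (by ring)]
        · intro j' _ hj'
          rw [chi_sum_eq, if_neg, zero_mul]
          intro h
          exact hj' (by rw [sub_add_eq_add_sub, sub_eq_zero] at h; exact h.symm)
        · intro h; exact absurd (mem_univ _) h
    _ = (N : ℂ) * ∑ j, v (j - s) * (starRingEnd ℂ) (v j) := by
        rw [← mul_sum]
        congr 1
        exact Fintype.sum_equiv (Equiv.addRight s) _ _ (fun x => by simp)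

lemma Ehat_inv (v : ZMod N → ℂ) (j₀ : ZMod N) :
    ∑ k, ZMod.stdAddChar (-(j₀ * k)) * Ehat v k = (N : ℂ) * v j₀ := by
  have step1 : ∀ k : ZMod N, ZMod.stdAddChar (-(j₀ * k)) * Ehat v k
      = ∑ j, ZMod.stdAddChar ((j - j₀) * k) * v j := by
    intro k
    rw [Ehat, mul_sum]
    refine sum_congr rfl fun j _ => ?_
    have h : (j - j₀) * k = -(j₀ * k) + j * k := by ring
    rw [h, chi_add]
    ring
  calc ∑ k, ZMod.stdAddChar (-(j₀ * k)) * Ehat v k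
      = ∑ j : ZMod N, (∑ k : ZMod N, ZMod.stdAddChar ((j - j₀) * k)) * v j := by
        rw [sum_congr rfl fun k _ => step1 k, sum_comm]
        exact sum_congr rfl fun j _ => (sum_mul _ _ _).symm
    _ = (N : ℂ) * v j₀ := by
        rw [Finset.sum_eq_single j₀]
        · rw [chi_sum_eq, if_pos (by simp)]
        · intro j _ hj
          rw [chi_sum_eq, if_neg (fun h => hj (by rwa [sub_eq_zero] at h)), zero_mul]
        · intro h; exact absurd (mem_univ _) h


lemma chi_eq_exp (k : ZMod N) :
    ZMod.stdAddChar k = Complex.exp (((2 * π * k.val / N : ℝ) : ℂ) * Complex.I) := by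
  have h := ZMod.stdAddChar_coe (N := N) (k.val : ℤ)
  have h2 : (((k.val : ℤ)) : ZMod N) = k := by
    push_cast
    exact ZMod.natCast_zmod_val k
  rw [h2] at h
  rw [h]
  congr 1
  push_cast
  ring

lemma chi_re (k : ZMod N) : (ZMod.stdAddChar k).re = Real.cos (2 * π * k.val / N) := by
  rw [chi_eq_exp, Complex.exp_ofReal_mul_I_re]

lemma chi_im (k : ZMod N) : (ZMod.stdAddChar k).im = Real.sin (2 * π * k.val / N) := by
  rw [chi_eq_exp, Complex.exp_ofReal_mul_I_im]

lemma cos_le_aux {N : ℕ} (hN : 4 ≤ N) {v : ℕ} (h1 : 1 ≤ v) (h2 : v < N) :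
    Real.cos (2 * π * v / N) ≤ Real.cos (2 * π / N) := by
  have hNpos : (0 : ℝ) < N := by positivity
  have hπ := Real.pi_pos
  have hv1 : (1 : ℝ) ≤ v := by exact_mod_cast h1
  have hvN : (v : ℝ) < N := by exact_mod_cast h2
  rcases le_or_gt (2 * v) N with h | h
  · have h' : (2 : ℝ) * v ≤ N := by exact_mod_cast h
    apply Real.cos_le_cos_of_nonneg_of_le_pi
    · positivity
    · rw [div_le_iff₀ hNpos]; nlinarith
    · have key : (1 : ℝ) * (2 * π * N) ≤ v * (2 * π * N) :=
        mul_le_mul_of_nonneg_right hv1 (by positivity)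
      rw [div_le_div_iff₀ hNpos hNpos]; nlinarith [key]
  · have h' : (N : ℝ) < 2 * v := by exact_mod_cast h
    rw [← Real.cos_two_pi_sub]
    have heq : 2 * π - 2 * π * v / N = 2 * π * ((N : ℝ) - v) / N := by
      field_simp
    rw [heq]
    apply Real.cos_le_cos_of_nonneg_of_le_pi
    · positivity
    · rw [div_le_iff₀ hNpos]; nlinarith
    · have hs : (v : ℝ) + 1 ≤ N := by exact_mod_cast Nat.succ_le_of_lt h2
      have h1' : (1 : ℝ) ≤ (N : ℝ) - v := by linarith
      have key : (1 : ℝ) * (2 * π * N) ≤ ((N : ℝ) - v) * (2 * π * N) :=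
        mul_le_mul_of_nonneg_right h1' (by positivity)
      rw [div_le_div_iff₀ hNpos hNpos]; nlinarith [key]

lemma cos_lt_aux {N : ℕ} (hN : 4 ≤ N) {v : ℕ} (h1 : 2 ≤ v) (h2 : v + 2 ≤ N) :
    Real.cos (2 * π * v / N) < Real.cos (2 * π / N) := by
  have hNpos : (0 : ℝ) < N := by positivity
  have hπ := Real.pi_pos
  have hv1 : (2 : ℝ) ≤ v := by exact_mod_cast h1
  have hvN : (v : ℝ) + 2 ≤ N := by exact_mod_cast h2
  rcases le_or_gt (2 * v) N with h | h
  · have h' : (2 : ℝ) * v ≤ N := by exact_mod_cast h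
    apply Real.cos_lt_cos_of_nonneg_of_le_pi
    · positivity
    · rw [div_le_iff₀ hNpos]; nlinarith
    · have key : (1 : ℝ) * (2 * π * N) < v * (2 * π * N) :=
        mul_lt_mul_of_pos_right (by linarith) (by positivity)
      rw [div_lt_div_iff₀ hNpos hNpos]; nlinarith [key]
  · have h' : (N : ℝ) < 2 * v := by exact_mod_cast h
    rw [← Real.cos_two_pi_sub]
    have heq : 2 * π - 2 * π * v / N = 2 * π * ((N : ℝ) - v) / N := by
      field_simp
    rw [heq]
    apply Real.cos_lt_cos_of_nonneg_of_le_pi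
    · positivity
    · rw [div_le_iff₀ hNpos]; nlinarith
    · have h1' : (1 : ℝ) < (N : ℝ) - v := by linarith
      have key : (1 : ℝ) * (2 * π * N) < ((N : ℝ) - v) * (2 * π * N) :=
        mul_lt_mul_of_pos_right h1' (by positivity)
      rw [div_lt_div_iff₀ hNpos hNpos]; nlinarith [key]

lemma chi_re_le (hN : 4 ≤ N) {k : ZMod N} (h0 : k ≠ 0) :
    (ZMod.stdAddChar k).re ≤ Real.cos (2 * π / N) := by
  rw [chi_re]
  have hv0 : k.val ≠ 0 := fun h => h0 ((ZMod.val_eq_zero k).mp h)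
  exact cos_le_aux hN (Nat.one_le_iff_ne_zero.mpr hv0) k.val_lt

lemma chi_re_lt (hN : 4 ≤ N) {k : ZMod N} (h0 : k ≠ 0) (h1 : k ≠ 1) (h2 : k ≠ -1) :
    (ZMod.stdAddChar k).re < Real.cos (2 * π / N) := by
  rw [chi_re]
  have hv0 : k.val ≠ 0 := fun h => h0 ((ZMod.val_eq_zero k).mp h)
  have hvlt := k.val_lt
  have hv1 : k.val ≠ 1 := by
    intro h
    apply h1
    have hk : k = ((k.val : ℕ) : ZMod N) := (ZMod.natCast_zmod_val k).symm
    rw [hk, h]; norm_num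
  have hvN1 : k.val ≠ N - 1 := by
    intro h
    apply h2
    have hk : k = ((k.val : ℕ) : ZMod N) := (ZMod.natCast_zmod_val k).symm
    rw [hk, h]
    have hcast : ((N - 1 : ℕ) : ZMod N) = (N : ZMod N) - 1 := by
      have hN1 : 1 ≤ N := by omega
      push_cast [Nat.cast_sub hN1]
      ring
    rw [hcast, ZMod.natCast_self]
    ring
  exact cos_lt_aux hN (by omega) (by omega)

lemma sin_piN_pos (hN : 4 ≤ N) : 0 < Real.sin (π / N) := by
  have hπ := Real.pi_pos
  have hNpos : (0 : ℝ) < N := by positivity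
  apply Real.sin_pos_of_pos_of_lt_pi
  · positivity
  · have h4 : (4 : ℝ) ≤ N := by exact_mod_cast hN
    rw [div_lt_iff₀ hNpos]
    nlinarith

lemma abs_chi_one_sub_one (hN : 4 ≤ N) :
    ‖ZMod.stdAddChar (1 : ZMod N) - 1‖ = 2 * Real.sin (π / N) := by
  haveI : Fact (1 < N) := ⟨by omega⟩
  have hval : (1 : ZMod N).val = 1 := ZMod.val_one _
  have hre := chi_re (1 : ZMod N)
  have him := chi_im (1 : ZMod N)
  rw [hval] at hre him
  set t : ℝ := 2 * π / N with ht
  have ht' : 2 * π * (1 : ℕ) / N = t := by rw [ht]; push_cast; ring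
  rw [ht'] at hre him
  have ht2 : t / 2 = π / N := by rw [ht]; ring
  have hcos : Real.cos t = 1 - 2 * Real.sin (π / N) ^ 2 := by
    rw [show t = 2 * (t / 2) by ring, Real.cos_two_mul, Real.cos_sq', ht2]
    ring
  have hns : Complex.normSq (ZMod.stdAddChar (1 : ZMod N) - 1)
      = (2 * Real.sin (π / N)) ^ 2 := by
    rw [Complex.normSq_apply]
    simp only [Complex.sub_re, Complex.sub_im, Complex.one_re, Complex.one_im]
    rw [hre, him]
    have := Real.sin_sq_add_cos_sq t
    nlinarith
  rw [Complex.norm_def, hns, Real.sqrt_sq (by linarith [sin_piN_pos (N := N) hN])]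


lemma zmod_const {α : Type*} (g : ZMod N → α) (h : ∀ j, g (j + 1) = g j) (j : ZMod N) :
    g j = g 0 := by
  have key : ∀ n : ℕ, g ((n : ZMod N)) = g 0 := by
    intro n
    induction n with
    | zero => norm_num
    | succ n ih =>
      have hc : ((n + 1 : ℕ) : ZMod N) = (n : ZMod N) + 1 := by push_cast; ring
      rw [hc, h, ih]
  have := key j.val
  rwa [ZMod.natCast_zmod_val] at this

/-- The affine map `z ↦ C + u * z` (`|u| = 1`) as an isometry equivalence of `ℂ`. -/
noncomputable def affIso (C u : ℂ) (hu : ‖u‖ = 1) : ℂ ≃ᵢ ℂ where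
  toEquiv :=
  { toFun := fun z => C + u * z
    invFun := fun z => u⁻¹ * (z - C)
    left_inv := fun z => by
      have hu0 : u ≠ 0 := by
        intro h; rw [h] at hu; simp at hu
      field_simp
      ring
    right_inv := fun z => by
      have hu0 : u ≠ 0 := by
        intro h; rw [h] at hu; simp at hu
      field_simp
      ring }
  isometry_toFun := Isometry.of_dist_eq fun a b => by
    simp only [Equiv.coe_fn_mk, Complex.dist_eq]
    rw [show C + u * a - (C + u * b) = u * (a - b) by ring, norm_mul, hu, one_mul]

lemma affIso_apply (C u : ℂ) (hu : ‖u‖ = 1) (z : ℂ) : affIso C u hu z = C + u * z := rfl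

/-- conjugation isometry -/
noncomputable def conjIso : ℂ ≃ᵢ ℂ := Complex.conjLIE.toIsometryEquiv

lemma conjIso_apply (z : ℂ) : conjIso z = (starRingEnd ℂ) z := rfl


lemma sin_two_piN_pos (hN : 4 ≤ N) : 0 < Real.sin (2 * π / N) := by
  have hπ := Real.pi_pos
  have hNpos : (0 : ℝ) < N := by positivity
  have h4 : (4 : ℝ) ≤ N := by exact_mod_cast hN
  apply Real.sin_pos_of_pos_of_lt_pi
  · positivity
  · rw [div_lt_iff₀ hNpos]
    nlinarith

lemma flip_re (z w : ℂ) : (z * (starRingEnd ℂ) w).re = (w * (starRingEnd ℂ) z).re := by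
  simp only [Complex.mul_re, Complex.conj_re, Complex.conj_im]
  ring

lemma main_complex (hN : 4 ≤ N) (ℓ : ℝ) (hℓ : 0 < ℓ) (f : ZMod N → ℂ)
    (hy : ∀ i, ‖f (i + 1) - f i‖ = ℓ)
    (heq : ∑ i : ZMod N, ‖f i - f (i + 2)‖ = 2 * N * ℓ * Real.cos (π / N)) :
    ∃ C u : ℂ, ‖u‖ = 1 ∧
      ((∀ j, f j = C + u * (((ℓ / (2 * Real.sin (π / N)) : ℝ) : ℂ) * ZMod.stdAddChar j)) ∨
       (∀ j, f j = C + u * (starRingEnd ℂ)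
          (((ℓ / (2 * Real.sin (π / N)) : ℝ) : ℂ) * ZMod.stdAddChar j))) := by
  classical
  have hNR : (0 : ℝ) < N := by
    have := NeZero.pos N
    exact_mod_cast this
  have hNC : (N : ℂ) ≠ 0 := Nat.cast_ne_zero.mpr (NeZero.ne N)
  set c₁ := Real.cos (π / N) with hc₁
  set c₂ := Real.cos (2 * π / N) with hc₂
  have hc12 : c₂ = 2 * c₁ ^ 2 - 1 := by
    rw [hc₂, hc₁, show 2 * π / (N : ℝ) = 2 * (π / N) by ring, Real.cos_two_mul]
  set e : ZMod N → ℂ := fun i => f (i + 1) - f i with he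
  have habs : ∀ i, ‖e i‖ = ℓ := hy
  have hns : ∀ i, Complex.normSq (e i) = ℓ ^ 2 := by
    intro i
    rw [← Complex.sq_norm, habs]
  have hsum0 : ∑ i, e i = 0 := by
    rw [he, Finset.sum_sub_distrib,
      Fintype.sum_equiv (Equiv.addRight (1 : ZMod N)) (fun i => f (i + 1)) f (fun i => rfl),
      sub_self]
  set x : ZMod N → ℝ := fun i => ‖e i + e (i + 1)‖ with hxdef
  have hxsum : ∑ i, x i = 2 * N * ℓ * c₁ := by
    rw [← heq]
    refine Finset.sum_congr rfl fun i _ => ?_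
    have h2 : e i + e (i + 1) = f (i + 2) - f i := by
      rw [he]
      simp only
      rw [show i + 1 + 1 = i + 2 by ring]
      ring
    show ‖e i + e (i + 1)‖ = ‖f i - f (i + 2)‖
    rw [h2, norm_sub_rev]
  have hxsq : ∀ i, x i ^ 2 = 2 * ℓ ^ 2 + 2 * (e i * (starRingEnd ℂ) (e (i + 1))).re := by
    intro i
    show ‖e i + e (i + 1)‖ ^ 2 = 2 * ℓ ^ 2 + 2 * (e i * (starRingEnd ℂ) (e (i + 1))).re
    rw [Complex.sq_norm, Complex.normSq_add, hns, hns]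
    ring
  set E : ZMod N → ℂ := Ehat e with hE
  have hE0 : E 0 = 0 := by
    rw [hE, Ehat]
    simp only [mul_zero, AddChar.map_zero_eq_one, one_mul]
    exact hsum0
  set S : ℝ := ∑ i, (e (i + 1) * (starRingEnd ℂ) (e i)).re with hS
  have hP0 : ∑ k, Complex.normSq (E k) = N ^ 2 * ℓ ^ 2 := by
    have h := Ehat_pair e 0
    simp only [mul_zero, AddChar.map_zero_eq_one, mul_one, sub_zero, Complex.mul_conj] at h
    have h2 : ∑ j, (Complex.normSq (e j) : ℂ) = (N : ℂ) * ((ℓ ^ 2 : ℝ) : ℂ) := by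
      rw [Finset.sum_congr rfl fun j _ => by rw [hns j]]
      rw [Finset.sum_const, Finset.card_univ, ZMod.card, nsmul_eq_mul]
    rw [h2] at h
    have h3 : ((∑ k, Complex.normSq (E k) : ℝ) : ℂ) = (((N : ℝ) ^ 2 * ℓ ^ 2 : ℝ) : ℂ) := by
      push_cast
      rw [← hE] at h
      rw [h]
      push_cast
      ring
    exact_mod_cast h3
  have hP1 : ∑ k, Complex.normSq (E k) * (ZMod.stdAddChar k).re = N * S := by
    have h := Ehat_pair e (-1)
    simp only [mul_neg_one, sub_neg_eq_add, Complex.mul_conj] at h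
    rw [← hE] at h
    have h' := congrArg Complex.re h
    rw [Complex.re_sum] at h'
    rw [Finset.sum_congr rfl (fun k (_ : k ∈ Finset.univ) => by
      rw [← chi_conj, Complex.re_ofReal_mul, Complex.conj_re] :
      ∀ k ∈ Finset.univ, ((Complex.normSq (E k) : ℂ) * ZMod.stdAddChar (-k)).re
        = Complex.normSq (E k) * (ZMod.stdAddChar k).re)] at h'
    rw [show ((N : ℕ) : ℂ) = (((N : ℕ) : ℝ) : ℂ) from (Complex.ofReal_natCast N).symm,
      Complex.re_ofReal_mul, Complex.re_sum] at h'
    exact h'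
  have hSle : S ≤ N * ℓ ^ 2 * c₂ := by
    have hb : ∑ k, Complex.normSq (E k) * (ZMod.stdAddChar k).re
        ≤ ∑ k, Complex.normSq (E k) * c₂ := by
      apply Finset.sum_le_sum
      intro k _
      by_cases hk : k = 0
      · rw [hk, hE0]
        simp
      · exact mul_le_mul_of_nonneg_left (chi_re_le hN hk) (Complex.normSq_nonneg _)
    rw [hP1, ← Finset.sum_mul, hP0] at hb
    have h4 : (N : ℝ) * S ≤ (N : ℝ) * (N * ℓ ^ 2 * c₂) := by nlinarith [hb]
    exact le_of_mul_le_mul_left h4 hNR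
  have hQ : ∑ i, x i ^ 2 = 2 * N * ℓ ^ 2 + 2 * S := by
    rw [Finset.sum_congr rfl fun i _ => hxsq i]
    rw [Finset.sum_add_distrib, Finset.sum_const, Finset.card_univ, ZMod.card, nsmul_eq_mul,
      ← Finset.mul_sum]
    rw [Finset.sum_congr rfl (fun i (_ : i ∈ Finset.univ) => flip_re (e i) (e (i + 1)))]
    rw [hS]
    ring
  have hxall : ∀ i, x i = 2 * ℓ * c₁ := by
    have hsum_sq : ∑ i, (x i - 2 * ℓ * c₁) ^ 2 ≤ 0 := by
      have hexp : ∑ i, (x i - 2 * ℓ * c₁) ^ 2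
          = ∑ i, x i ^ 2 - 4 * ℓ * c₁ * (∑ i, x i) + N * (4 * ℓ ^ 2 * c₁ ^ 2) := by
        rw [Finset.sum_congr rfl fun i (_ : i ∈ Finset.univ) =>
          show (x i - 2 * ℓ * c₁) ^ 2 = x i ^ 2 - 4 * ℓ * c₁ * x i + 4 * ℓ ^ 2 * c₁ ^ 2 by ring]
        rw [Finset.sum_add_distrib, Finset.sum_sub_distrib, ← Finset.mul_sum, Finset.sum_const,
          Finset.card_univ, ZMod.card, nsmul_eq_mul]
      rw [hexp, hxsum, hQ]
      have hkey : 2 * (N : ℝ) * ℓ ^ 2 + 2 * S - 4 * ℓ * c₁ * (2 * N * ℓ * c₁)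
          + N * (4 * ℓ ^ 2 * c₁ ^ 2) = 2 * (S - N * ℓ ^ 2 * c₂) := by
        rw [hc12]
        ring
      linarith [hkey, hSle]
    have h0' : ∑ i, (x i - 2 * ℓ * c₁) ^ 2 = 0 :=
      le_antisymm hsum_sq (Finset.sum_nonneg fun i _ => sq_nonneg _)
    intro i
    have hz := (Finset.sum_eq_zero_iff_of_nonneg (fun i _ => sq_nonneg _)).mp h0' i
      (Finset.mem_univ i)
    have h2 : x i - 2 * ℓ * c₁ = 0 := pow_eq_zero_iff two_ne_zero |>.mp hz
    linarith
  have hSeq : S = N * ℓ ^ 2 * c₂ := by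
    have hQ' : ∑ i, x i ^ 2 = N * (2 * ℓ * c₁) ^ 2 := by
      rw [Finset.sum_congr rfl fun i (_ : i ∈ Finset.univ) => by rw [hxall i]]
      rw [Finset.sum_const, Finset.card_univ, ZMod.card, nsmul_eq_mul]
    rw [hQ] at hQ'
    have hkey : (N : ℝ) * (2 * ℓ * c₁) ^ 2 = 2 * N * ℓ ^ 2 + 2 * (N * ℓ ^ 2 * c₂) := by
      rw [hc12]
      ring
    linarith
  have hEzero : ∀ k : ZMod N, k ≠ 0 → k ≠ 1 → k ≠ -1 → E k = 0 := by
    have hsum' : ∑ k, Complex.normSq (E k) * (c₂ - (ZMod.stdAddChar k).re) = 0 := by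
      rw [Finset.sum_congr rfl fun k (_ : k ∈ Finset.univ) =>
        show Complex.normSq (E k) * (c₂ - (ZMod.stdAddChar k).re)
          = Complex.normSq (E k) * c₂ - Complex.normSq (E k) * (ZMod.stdAddChar k).re by ring]
      rw [Finset.sum_sub_distrib, ← Finset.sum_mul, hP0, hP1, hSeq]
      ring
    have hnn : ∀ k ∈ Finset.univ, 0 ≤ Complex.normSq (E k) * (c₂ - (ZMod.stdAddChar k).re) := by
      intro k _
      by_cases hk : k = 0
      · rw [hk, hE0]
        simp
      · exact mul_nonneg (Complex.normSq_nonneg _) (by linarith [chi_re_le hN hk])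
    intro k hk0 hk1 hkm1
    have hterm := (Finset.sum_eq_zero_iff_of_nonneg hnn).mp hsum' k (Finset.mem_univ k)
    have hlt := chi_re_lt hN hk0 hk1 hkm1
    have hnsz : Complex.normSq (E k) = 0 := by
      rcases mul_eq_zero.mp hterm with h | h
      · exact h
      · linarith
    exact Complex.normSq_eq_zero.mp hnsz
  have hN2 : ¬ ((N : ℕ) ∣ 2) := by
    intro h
    have := Nat.le_of_dvd (by norm_num) h
    omega
  have h2ne0 : (2 : ZMod N) ≠ 0 := by
    intro h
    have h' : ((2 : ℕ) : ZMod N) = 0 := by exact_mod_cast h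
    exact hN2 ((ZMod.natCast_eq_zero_iff 2 N).mp h')
  have h1nem1 : (1 : ZMod N) ≠ -1 := by
    intro h
    apply h2ne0
    calc (2 : ZMod N) = 1 + 1 := by norm_num
    _ = 0 := by linear_combination h
  have h1ne0 : (1 : ZMod N) ≠ 0 := by
    intro h
    apply h2ne0
    calc (2 : ZMod N) = 1 + 1 := by norm_num
    _ = 0 := by linear_combination 2 * h
  have hm1ne0 : (-1 : ZMod N) ≠ 0 := by
    intro h
    exact h1ne0 (by linear_combination -h)
  obtain ⟨a, ha⟩ : ∃ a : ℂ, a = (N : ℂ)⁻¹ * E (-1) := ⟨_, rfl⟩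
  obtain ⟨b, hb⟩ : ∃ b : ℂ, b = (N : ℂ)⁻¹ * E 1 := ⟨_, rfl⟩
  have hstruct : ∀ j, e j = a * ZMod.stdAddChar j + b * ZMod.stdAddChar (-j) := by
    intro j
    have hinv := Ehat_inv e j
    rw [← hE] at hinv
    have hsub : ∑ k, ZMod.stdAddChar (-(j * k)) * E k
        = ∑ k ∈ ({0, 1, -1} : Finset (ZMod N)), ZMod.stdAddChar (-(j * k)) * E k := by
      symm
      apply Finset.sum_subset (Finset.subset_univ _)
      intro k _ hk
      simp only [Finset.mem_insert, Finset.mem_singleton] at hk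
      push_neg at hk
      rw [hEzero k hk.1 hk.2.1 hk.2.2, mul_zero]
    rw [hsub] at hinv
    rw [Finset.sum_insert (by simp [h1ne0.symm, hm1ne0.symm]),
      Finset.sum_insert (by simp [h1nem1]), Finset.sum_singleton] at hinv
    rw [hE0, mul_zero, zero_add] at hinv
    rw [mul_one, mul_neg_one, neg_neg] at hinv
    rw [ha, hb]
    calc e j = (N : ℂ)⁻¹ * ((N : ℂ) * e j) := by rw [inv_mul_cancel_left₀ hNC]
    _ = (N : ℂ)⁻¹ * (ZMod.stdAddChar (-j) * E 1 + ZMod.stdAddChar j * E (-1)) := by rw [hinv]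
    _ = (N : ℂ)⁻¹ * E (-1) * ZMod.stdAddChar j + (N : ℂ)⁻¹ * E 1 * ZMod.stdAddChar (-j) := by
      ring
  have hre2 : ∀ i, (e i * (starRingEnd ℂ) (e (i + 1))).re = ℓ ^ 2 * c₂ := by
    intro i
    have h := hxsq i
    rw [hxall i] at h
    nlinarith [hc12]
  obtain ⟨z, hzdef⟩ : ∃ z : ℂ, z = a * (starRingEnd ℂ) b := ⟨_, rfl⟩
  have hconjz : (starRingEnd ℂ) z = (starRingEnd ℂ) a * b := by
    rw [hzdef, map_mul, Complex.conj_conj]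
  have key_same : ∀ i : ZMod N,
      (a * (starRingEnd ℂ) a).re + (b * (starRingEnd ℂ) b).re
        + 2 * (z * ZMod.stdAddChar (2 * i)).re = ℓ ^ 2 := by
    intro i
    have hexp : e i * (starRingEnd ℂ) (e i)
        = (a * (starRingEnd ℂ) a + b * (starRingEnd ℂ) b)
          + (z * ZMod.stdAddChar (2 * i)
            + (starRingEnd ℂ) (z * ZMod.stdAddChar (2 * i))) := by
      rw [map_mul (starRingEnd ℂ), chi_conj, hconjz]
      nth_rewrite 1 [hstruct i]
      nth_rewrite 1 [hstruct i]
      rw [map_add, map_mul (starRingEnd ℂ), map_mul (starRingEnd ℂ), chi_conj, chi_conj, neg_neg]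
      have e1 : ZMod.stdAddChar i * ZMod.stdAddChar (-i) = (1 : ℂ) := by
        rw [← chi_add]
        simp
      have e2 : ZMod.stdAddChar i * ZMod.stdAddChar i = ZMod.stdAddChar (2 * i) := by
        rw [← chi_add]
        congr 1
        ring
      have e3 : ZMod.stdAddChar (-i) * ZMod.stdAddChar (-i) = ZMod.stdAddChar (-(2 * i)) := by
        rw [← chi_add]
        congr 1
        ring
      rw [hzdef]
      linear_combination (a * (starRingEnd ℂ) a + b * (starRingEnd ℂ) b) * e1
        + (a * (starRingEnd ℂ) b) * e2 + (b * (starRingEnd ℂ) a) * e3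
    have hre := congrArg Complex.re hexp
    rw [Complex.mul_conj, Complex.ofReal_re, hns i] at hre
    simp only [Complex.add_re, Complex.conj_re] at hre
    linarith
  have key_next : ∀ i : ZMod N,
      ((a * (starRingEnd ℂ) a) * ZMod.stdAddChar (-1 : ZMod N)).re
        + ((b * (starRingEnd ℂ) b) * ZMod.stdAddChar (1 : ZMod N)).re
        + 2 * (z * ZMod.stdAddChar (2 * i + 1)).re = ℓ ^ 2 * c₂ := by
    intro i
    have hexp : e i * (starRingEnd ℂ) (e (i + 1))
        = ((a * (starRingEnd ℂ) a) * ZMod.stdAddChar (-1 : ZMod N)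
          + (b * (starRingEnd ℂ) b) * ZMod.stdAddChar (1 : ZMod N))
          + (z * ZMod.stdAddChar (2 * i + 1)
            + (starRingEnd ℂ) (z * ZMod.stdAddChar (2 * i + 1))) := by
      rw [map_mul (starRingEnd ℂ), chi_conj, hconjz]
      nth_rewrite 1 [hstruct i]
      nth_rewrite 1 [hstruct (i + 1)]
      rw [map_add, map_mul (starRingEnd ℂ), map_mul (starRingEnd ℂ), chi_conj, chi_conj, neg_neg]
      have e1 : ZMod.stdAddChar i * ZMod.stdAddChar (-(i + 1))
          = ZMod.stdAddChar (-1 : ZMod N) := by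
        rw [← chi_add]
        congr 1
        ring
      have e2 : ZMod.stdAddChar i * ZMod.stdAddChar (i + 1)
          = ZMod.stdAddChar (2 * i + 1) := by
        rw [← chi_add]
        congr 1
        ring
      have e3 : ZMod.stdAddChar (-i) * ZMod.stdAddChar (-(i + 1))
          = ZMod.stdAddChar (-(2 * i + 1)) := by
        rw [← chi_add]
        congr 1
        ring
      have e4 : ZMod.stdAddChar (-i) * ZMod.stdAddChar (i + 1)
          = ZMod.stdAddChar (1 : ZMod N) := by
        rw [← chi_add]
        congr 1
        ring
      rw [hzdef]
      linear_combination (a * (starRingEnd ℂ) a) * e1 + (a * (starRingEnd ℂ) b) * e2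
        + (b * (starRingEnd ℂ) a) * e3 + (b * (starRingEnd ℂ) b) * e4
    have hre := congrArg Complex.re hexp
    rw [hre2 i] at hre
    simp only [Complex.add_re, Complex.conj_re] at hre
    linarith
  have hz0 : z = 0 := by
    obtain ⟨w, hwdef⟩ : ∃ w : ℂ, w = z - z * ZMod.stdAddChar (2 : ZMod N) := ⟨_, rfl⟩
    have k0 := key_same 0
    rw [mul_zero, AddChar.map_zero_eq_one, mul_one] at k0
    have k1 := key_same 1
    rw [mul_one] at k1
    have hwre : w.re = 0 := by
      rw [hwdef, Complex.sub_re]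
      linarith
    have n0 := key_next 0
    rw [mul_zero, zero_add] at n0
    have n1 := key_next 1
    rw [show (2 * (1 : ZMod N) + 1) = (3 : ZMod N) by norm_num] at n1
    have hwc : w * ZMod.stdAddChar (1 : ZMod N)
        = z * ZMod.stdAddChar (1 : ZMod N) - z * ZMod.stdAddChar (3 : ZMod N) := by
      have hch : ZMod.stdAddChar (2 : ZMod N) * ZMod.stdAddChar (1 : ZMod N)
          = ZMod.stdAddChar (3 : ZMod N) := by
        rw [← chi_add]
        congr 1
        norm_num
      rw [hwdef]
      linear_combination (-z) * hch
    have hwchire : (w * ZMod.stdAddChar (1 : ZMod N)).re = 0 := by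
      rw [hwc, Complex.sub_re]
      linarith
    have him1 : (ZMod.stdAddChar (1 : ZMod N)).im = Real.sin (2 * π / N) := by
      haveI : Fact (1 < N) := ⟨by omega⟩
      rw [chi_im, ZMod.val_one]
      norm_num
    have hsin2 := sin_two_piN_pos (N := N) hN
    have hwim : w.im = 0 := by
      rw [Complex.mul_re, hwre, zero_mul, zero_sub, him1] at hwchire
      have h0 := neg_eq_zero.mp hwchire
      rcases mul_eq_zero.mp h0 with h | h
      · exact h
      · exfalso
        rw [h] at hsin2
        exact lt_irrefl 0 hsin2
    have hw0 : w = 0 := by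
      apply Complex.ext
      · rw [hwre, Complex.zero_re]
      · rw [hwim, Complex.zero_im]
    have hwz : w = z * (1 - ZMod.stdAddChar (2 : ZMod N)) := by
      rw [hwdef]
      ring
    rw [hwz] at hw0
    rcases mul_eq_zero.mp hw0 with h | h
    · exact h
    · exfalso
      have hch2 : ZMod.stdAddChar (2 : ZMod N) = ZMod.stdAddChar (0 : ZMod N) := by
        rw [AddChar.map_zero_eq_one]
        linear_combination -h
      exact h2ne0 (ZMod.injective_stdAddChar hch2)
  -- reconstruction
  have hsin := sin_piN_pos (N := N) hN
  have hRpos : 0 < ℓ / (2 * Real.sin (π / N)) := div_pos hℓ (by linarith)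
  have hRne : ((ℓ / (2 * Real.sin (π / N)) : ℝ) : ℂ) ≠ 0 :=
    Complex.ofReal_ne_zero.mpr (ne_of_gt hRpos)
  have hζabs := abs_chi_one_sub_one (N := N) hN
  have hζne : ZMod.stdAddChar (1 : ZMod N) - 1 ≠ 0 := by
    intro h0
    rw [h0, norm_zero] at hζabs
    linarith
  have hab0 : a * (starRingEnd ℂ) b = 0 := by rw [← hzdef]; exact hz0
  rcases mul_eq_zero.mp hab0 with ha0 | hb0'
  · -- a = 0 : reversed orientation
    have hb0 : ∀ j, e j = b * ZMod.stdAddChar (-j) := by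
      intro j
      rw [hstruct j, ha0]
      ring
    have hbabs : ‖b‖ = ℓ := by
      have h0 := habs 0
      have h1 : e 0 = b := by
        rw [hb0 0, neg_zero, AddChar.map_zero_eq_one, mul_one]
      rw [h1] at h0
      exact h0
    have hζ'sub : ZMod.stdAddChar (-1 : ZMod N) - 1
        = (starRingEnd ℂ) (ZMod.stdAddChar (1 : ZMod N) - 1) := by
      rw [map_sub, chi_conj, map_one]
    have hζ'abs : ‖ZMod.stdAddChar (-1 : ZMod N) - 1‖ = 2 * Real.sin (π / N) := by
      rw [hζ'sub, Complex.norm_conj, hζabs]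
    have hζ'ne : ZMod.stdAddChar (-1 : ZMod N) - 1 ≠ 0 := by
      intro h0
      rw [h0, norm_zero] at hζ'abs
      linarith
    obtain ⟨b', hb'⟩ : ∃ b' : ℂ, b' = b / (ZMod.stdAddChar (-1 : ZMod N) - 1) := ⟨_, rfl⟩
    have h3 : b' * (ZMod.stdAddChar (-1 : ZMod N) - 1) = b := by
      rw [hb']
      exact div_mul_cancel₀ b hζ'ne
    have hstep : ∀ j : ZMod N,
        f (j + 1) - b' * ZMod.stdAddChar (-(j + 1)) = f j - b' * ZMod.stdAddChar (-j) := by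
      intro j
      have h1 : ZMod.stdAddChar (-(j + 1) : ZMod N)
          = ZMod.stdAddChar (-j) * ZMod.stdAddChar (-1 : ZMod N) := by
        rw [show (-(j + 1) : ZMod N) = -j + -1 by ring, chi_add]
      have h2 : f (j + 1) - f j = b * ZMod.stdAddChar (-j) := hb0 j
      rw [h1]
      linear_combination h2 - ZMod.stdAddChar (-j) * h3
    have hval : ∀ j : ZMod N, f j - b' * ZMod.stdAddChar (-j) = f 0 - b' := by
      intro j
      have h := zmod_const (fun j => f j - b' * ZMod.stdAddChar (-j)) hstep j
      simp only [neg_zero, AddChar.map_zero_eq_one, mul_one] at h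
      exact h
    have hb'abs : ‖b'‖ = ℓ / (2 * Real.sin (π / N)) := by
      rw [hb', norm_div, hbabs, hζ'abs]
    refine ⟨f 0 - b', b' / ((ℓ / (2 * Real.sin (π / N)) : ℝ) : ℂ), ?_, Or.inr fun j => ?_⟩
    · rw [norm_div, hb'abs, Complex.norm_real, Real.norm_eq_abs, abs_of_pos hRpos,
        div_self (ne_of_gt hRpos)]
    · have hconj : (starRingEnd ℂ) (((ℓ / (2 * Real.sin (π / N)) : ℝ) : ℂ) * ZMod.stdAddChar j)
          = ((ℓ / (2 * Real.sin (π / N)) : ℝ) : ℂ) * ZMod.stdAddChar (-j) := by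
        rw [map_mul (starRingEnd ℂ), Complex.conj_ofReal, chi_conj]
      rw [hconj]
      have hcancel : b' / ((ℓ / (2 * Real.sin (π / N)) : ℝ) : ℂ)
          * (((ℓ / (2 * Real.sin (π / N)) : ℝ) : ℂ) * ZMod.stdAddChar (-j))
          = b' * ZMod.stdAddChar (-j) := by
        rw [show b' / ((ℓ / (2 * Real.sin (π / N)) : ℝ) : ℂ)
            * (((ℓ / (2 * Real.sin (π / N)) : ℝ) : ℂ) * ZMod.stdAddChar (-j))
            = b' * ZMod.stdAddChar (-j)
              * (((ℓ / (2 * Real.sin (π / N)) : ℝ) : ℂ) / ((ℓ / (2 * Real.sin (π / N)) : ℝ) : ℂ))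
          by ring, div_self hRne, mul_one]
      rw [hcancel]
      have := hval j
      linear_combination this
  · -- b = 0 : standard orientation
    have hb0 : b = 0 := by
      have := congrArg (starRingEnd ℂ) hb0'
      rwa [Complex.conj_conj, map_zero] at this
    have ha0 : ∀ j, e j = a * ZMod.stdAddChar j := by
      intro j
      rw [hstruct j, hb0]
      ring
    have haabs : ‖a‖ = ℓ := by
      have h0 := habs 0
      have h1 : e 0 = a := by
        rw [ha0 0, AddChar.map_zero_eq_one, mul_one]
      rw [h1] at h0
      exact h0
    obtain ⟨a', ha'⟩ : ∃ a' : ℂ, a' = a / (ZMod.stdAddChar (1 : ZMod N) - 1) := ⟨_, rfl⟩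
    have h3 : a' * (ZMod.stdAddChar (1 : ZMod N) - 1) = a := by
      rw [ha']
      exact div_mul_cancel₀ a hζne
    have hstep : ∀ j : ZMod N,
        f (j + 1) - a' * ZMod.stdAddChar (j + 1) = f j - a' * ZMod.stdAddChar j := by
      intro j
      have h1 : ZMod.stdAddChar (j + 1 : ZMod N)
          = ZMod.stdAddChar j * ZMod.stdAddChar (1 : ZMod N) := chi_add j 1
      have h2 : f (j + 1) - f j = a * ZMod.stdAddChar j := ha0 j
      rw [h1]
      linear_combination h2 - ZMod.stdAddChar j * h3
    have hval : ∀ j : ZMod N, f j - a' * ZMod.stdAddChar j = f 0 - a' := by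
      intro j
      have h := zmod_const (fun j => f j - a' * ZMod.stdAddChar j) hstep j
      simp only [AddChar.map_zero_eq_one, mul_one] at h
      exact h
    have ha'abs : ‖a'‖ = ℓ / (2 * Real.sin (π / N)) := by
      rw [ha', norm_div, haabs, hζabs]
    refine ⟨f 0 - a', a' / ((ℓ / (2 * Real.sin (π / N)) : ℝ) : ℂ), ?_, Or.inl fun j => ?_⟩
    · rw [norm_div, ha'abs, Complex.norm_real, Real.norm_eq_abs, abs_of_pos hRpos,
        div_self (ne_of_gt hRpos)]
    · have hcancel : a' / ((ℓ / (2 * Real.sin (π / N)) : ℝ) : ℂ)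
          * (((ℓ / (2 * Real.sin (π / N)) : ℝ) : ℂ) * ZMod.stdAddChar j)
          = a' * ZMod.stdAddChar j := by
        rw [show a' / ((ℓ / (2 * Real.sin (π / N)) : ℝ) : ℂ)
            * (((ℓ / (2 * Real.sin (π / N)) : ℝ) : ℂ) * ZMod.stdAddChar j)
            = a' * ZMod.stdAddChar j
              * (((ℓ / (2 * Real.sin (π / N)) : ℝ) : ℂ) / ((ℓ / (2 * Real.sin (π / N)) : ℝ) : ℂ))
          by ring, div_self hRne, mul_one]
      rw [hcancel]
      have := hval j
      linear_combination this

end RegAux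

open Real RegAux

/-- The regular `N`-gon with edge length `ℓ` in the plane:
`ỹ_j = R(cos(2πj/N), sin(2πj/N))` with `R = ℓ(2 sin(π/N))⁻¹`. -/
noncomputable def regularNGon (N : ℕ) (ℓ : ℝ) : ZMod N → EuclideanSpace ℝ (Fin 2) :=
  fun j => WithLp.toLp 2 ![ℓ / (2 * Real.sin (Real.pi / N)) * Real.cos (2 * Real.pi * j.val / N),
             ℓ / (2 * Real.sin (Real.pi / N)) * Real.sin (2 * Real.pi * j.val / N)]

/-- Let `N ≥ 4` and `ℓ > 0`. If an equilateral closed polygon `y : ℤ/Nℤ → ℝ²` with edge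
length `ℓ` satisfies `∑_i |y_i − y_{i+2}| = 2Nℓ cos(π/N)`, then `y` is the image of the
regular `N`-gon with edge length `ℓ` under an isometry of `ℝ²`. -/
theorem total_two_diagonal_length_eq_iff_regular (N : ℕ) [NeZero N] (hN : 4 ≤ N)
    (ℓ : ℝ) (hℓ : 0 < ℓ) (y : ZMod N → EuclideanSpace ℝ (Fin 2))
    (hy : ∀ i, dist (y (i + 1)) (y i) = ℓ)
    (heq : ∑ i : ZMod N, dist (y i) (y (i + 2)) = 2 * N * ℓ * Real.cos (Real.pi / N)) :
    ∃ T : EuclideanSpace ℝ (Fin 2) ≃ᵢ EuclideanSpace ℝ (Fin 2),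
      ∀ j, y j = T (regularNGon N ℓ j) := by
  classical
  set W := Complex.orthonormalBasisOneI.repr with hW
  set f : ZMod N → ℂ := fun j => W.symm (y j) with hf
  have hdist : ∀ a b : ZMod N, ‖f a - f b‖ = dist (y a) (y b) := by
    intro a b
    rw [← Complex.dist_eq, hf]
    exact W.symm.dist_map _ _
  have hy' : ∀ i, ‖f (i + 1) - f i‖ = ℓ := fun i => by rw [hdist]; exact hy i
  have heq' : ∑ i : ZMod N, ‖f i - f (i + 2)‖ = 2 * N * ℓ * Real.cos (π / N) := by
    rw [Finset.sum_congr rfl fun i _ => hdist i (i + 2)]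
    exact heq
  obtain ⟨C, u, hu, hcase⟩ := main_complex hN ℓ hℓ f hy' heq'
  have hreg : ∀ j : ZMod N, W.symm (regularNGon N ℓ j)
      = ((ℓ / (2 * Real.sin (π / N)) : ℝ) : ℂ) * ZMod.stdAddChar j := by
    intro j
    rw [hW, Complex.orthonormalBasisOneI_repr_symm_apply]
    have h0 : regularNGon N ℓ j 0 = ℓ / (2 * Real.sin (π / N)) * Real.cos (2 * π * j.val / N) := rfl
    have h1 : regularNGon N ℓ j 1 = ℓ / (2 * Real.sin (π / N)) * Real.sin (2 * π * j.val / N) := rfl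
    rw [h0, h1, chi_eq_exp, Complex.exp_mul_I, ← Complex.ofReal_cos, ← Complex.ofReal_sin]
    push_cast
    ring
  have hWf : ∀ j, W (f j) = y j := fun j => by rw [hf]; exact W.apply_symm_apply _
  rcases hcase with hc | hc
  · refine ⟨(W.symm.toIsometryEquiv.trans ((affIso C u hu).trans W.toIsometryEquiv)), fun j => ?_⟩
    have : (W.symm.toIsometryEquiv.trans ((affIso C u hu).trans W.toIsometryEquiv))
        (regularNGon N ℓ j) = W (C + u * (W.symm (regularNGon N ℓ j))) := rfl
    rw [this, hreg j, ← hc j, hWf j]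
  · refine ⟨(W.symm.toIsometryEquiv.trans (conjIso.trans
      ((affIso C u hu).trans W.toIsometryEquiv))), fun j => ?_⟩
    have : (W.symm.toIsometryEquiv.trans (conjIso.trans
        ((affIso C u hu).trans W.toIsometryEquiv)))
        (regularNGon N ℓ j) = W (C + u * (starRingEnd ℂ) (W.symm (regularNGon N ℓ j))) := rfl
    rw [this, hreg j, ← hc j, hWf j]
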